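/- Let B₁, …, B_k ∈ M_n(ℝ₊) be upper triangular matrices with all entries bounded above by M > 0 and all diagonal entries bounded above by s > 0. Then every entry of the max-times product satisfies (B₁⊗B₂⊗⋯⊗B_k)_{ij} ≤ C·s^k where C := max{1, M^{n-1}·s^{-(n-1)}}. -/

import Mathlib

open Filter Topology

/-- Max-times matrix-vector product: `(A ⊗ x) i = max_k A i k * x k`. -/
noncomputable def mvec {n : ℕ} (A : Matrix (Fin n) (Fin n) ℝ) (x : Fin n → ℝ) : Fin n → ℝ :=
  fun i => ⨆ k, A i k * x k

/-- Max-times matrix product: `(A ⊗ B) i j = max_k A i k * B k j`. -/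
noncomputable def mmul {n : ℕ} (A B : Matrix (Fin n) (Fin n) ℝ) : Matrix (Fin n) (Fin n) ℝ :=
  fun i j => ⨆ k, A i k * B k j

/-- Max-times matrix power. -/
noncomputable def mpow {n : ℕ} (A : Matrix (Fin n) (Fin n) ℝ) : ℕ → Matrix (Fin n) (Fin n) ℝ
  | 0 => 1
  | k + 1 => mmul A (mpow A k)

/-- Max-times product of a list of matrices. -/
noncomputable def mlist {n : ℕ} : List (Matrix (Fin n) (Fin n) ℝ) → Matrix (Fin n) (Fin n) ℝ
  | [] => 1
  | B :: l => mmul B (mlist l)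

/-- The seminorm `η(A) := sup {‖A ⊗ x‖ / ‖x‖ : 0 ≠ x ∈ ℝ₊ⁿ}` induced by a norm `N`. -/
noncomputable def eta {n : ℕ} (N : (Fin n → ℝ) → ℝ) (A : Matrix (Fin n) (Fin n) ℝ) : ℝ :=
  sSup {t | ∃ x : Fin n → ℝ, x ≠ 0 ∧ (∀ i, 0 ≤ x i) ∧ t = N (mvec A x) / N x}

lemma mlist_nonneg' {n : ℕ} (l : List (Matrix (Fin n) (Fin n) ℝ))
    (h : ∀ A ∈ l, ∀ i j, 0 ≤ A i j) (i j : Fin n) : 0 ≤ mlist l i j := by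
  induction l generalizing i with
  | nil =>
    show (0:ℝ) ≤ (1 : Matrix (Fin n) (Fin n) ℝ) i j
    rw [Matrix.one_apply]
    split <;> norm_num
  | cons A l ih =>
    apply Real.iSup_nonneg
    intro p
    exact mul_nonneg (h A (List.mem_cons_self) i p)
      (ih (fun C hC => h C (List.mem_cons_of_mem _ hC)) p)

lemma mlist_tri' {n : ℕ} (l : List (Matrix (Fin n) (Fin n) ℝ))
    (h : ∀ A ∈ l, ∀ i j : Fin n, (j : ℕ) < (i : ℕ) → A i j = 0)
    (i j : Fin n) (hij : (j : ℕ) < (i : ℕ)) : mlist l i j = 0 := by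
  induction l generalizing i with
  | nil =>
    show (1 : Matrix (Fin n) (Fin n) ℝ) i j = 0
    have hne : i ≠ j := fun he => by omega
    rw [Matrix.one_apply, if_neg hne]
  | cons A l ih =>
    haveI : Nonempty (Fin n) := ⟨i⟩
    show (⨆ p, A i p * mlist l p j) = 0
    have heq : (fun p : Fin n => A i p * mlist l p j) = fun _ => (0:ℝ) := by
      funext p
      rcases lt_or_ge (p : ℕ) (i : ℕ) with hp | hp
      · rw [h A (List.mem_cons_self) i p hp, zero_mul]
      · rw [ih (fun C hC => h C (List.mem_cons_of_mem _ hC)) p (by omega), mul_zero]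
    rw [heq, ciSup_const]

lemma mlist_bound' {n : ℕ} (M s : ℝ) (hM : 0 < M) (hs : 0 < s)
    (l : List (Matrix (Fin n) (Fin n) ℝ))
    (hpos : ∀ A ∈ l, ∀ i j, 0 ≤ A i j)
    (htri : ∀ A ∈ l, ∀ i j : Fin n, (j : ℕ) < (i : ℕ) → A i j = 0)
    (hbM : ∀ A ∈ l, ∀ i j, A i j ≤ M)
    (hbs : ∀ A ∈ l, ∀ i, A i i ≤ s)
    (i j : Fin n) :
    mlist l i j ≤ (max 1 (M / s)) ^ ((j : ℕ) - (i : ℕ)) * s ^ l.length := by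
  set A := max 1 (M / s) with hA
  have hA1 : (1:ℝ) ≤ A := le_max_left _ _
  have hA0 : (0:ℝ) ≤ A := by linarith
  induction l generalizing i with
  | nil =>
    show (1 : Matrix (Fin n) (Fin n) ℝ) i j ≤ _
    rw [Matrix.one_apply]
    have h1 : (1:ℝ) ≤ A ^ ((j : ℕ) - (i : ℕ)) := one_le_pow₀ hA1
    simp only [List.length_nil, pow_zero, mul_one]
    split <;> [exact h1; linarith]
  | cons C l ih =>
    haveI : Nonempty (Fin n) := ⟨i⟩
    show (⨆ p, C i p * mlist l p j) ≤ _
    have hposl := fun D hD => hpos D (List.mem_cons_of_mem _ hD)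
    have htril := fun D hD => htri D (List.mem_cons_of_mem _ hD)
    apply ciSup_le
    intro p
    have hsl : (0:ℝ) ≤ s ^ l.length := le_of_lt (pow_pos hs _)
    have hbound : 0 ≤ A ^ ((j : ℕ) - (i : ℕ)) * s ^ (C :: l).length :=
      mul_nonneg (pow_nonneg hA0 _) (le_of_lt (pow_pos hs _))
    rcases lt_or_ge (p : ℕ) (i : ℕ) with hp | hp
    · rw [htri C (List.mem_cons_self) i p hp, zero_mul]
      exact hbound
    rcases lt_or_ge (j : ℕ) (p : ℕ) with hjp | hjp
    · rw [mlist_tri' l htril p j hjp, mul_zero]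
      exact hbound
    have hml : mlist l p j ≤ A ^ ((j : ℕ) - (p : ℕ)) * s ^ l.length :=
      ih (fun D hD => hpos D (List.mem_cons_of_mem _ hD))
         (fun D hD => htri D (List.mem_cons_of_mem _ hD))
         (fun D hD => hbM D (List.mem_cons_of_mem _ hD))
         (fun D hD => hbs D (List.mem_cons_of_mem _ hD)) p
    have hml0 : 0 ≤ mlist l p j := mlist_nonneg' l hposl p j
    rcases eq_or_lt_of_le hp with hpi | hpi
    · -- p = i, diagonal step
      have hpi' : p = i := Fin.ext hpi.symm
      subst hpi'
      have hC : C p p ≤ s := hbs C (List.mem_cons_self) p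
      have hC0 : 0 ≤ C p p := hpos C (List.mem_cons_self) p p
      calc C p p * mlist l p j ≤ s * (A ^ ((j : ℕ) - (p : ℕ)) * s ^ l.length) :=
            mul_le_mul hC hml hml0 (le_of_lt hs)
        _ = A ^ ((j : ℕ) - (p : ℕ)) * s ^ (C :: l).length := by
            rw [List.length_cons, pow_succ]; ring
    · -- i < p, strict step
      have hC : C i p ≤ A * s := by
        have : M / s * s = M := div_mul_cancel₀ M (ne_of_gt hs)
        have hMAs : M ≤ A * s := by
          have := le_max_right (1:ℝ) (M / s)
          nlinarith
        exact le_trans (hbM C (List.mem_cons_self) i p) hMAs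
      have hC0 : 0 ≤ C i p := hpos C (List.mem_cons_self) i p
      have hmono : A ^ (((j : ℕ) - (p : ℕ)) + 1) ≤ A ^ ((j : ℕ) - (i : ℕ)) :=
        pow_le_pow_right₀ hA1 (by omega)
      calc C i p * mlist l p j
          ≤ (A * s) * (A ^ ((j : ℕ) - (p : ℕ)) * s ^ l.length) :=
            mul_le_mul hC hml hml0 (by positivity)
        _ = A ^ (((j : ℕ) - (p : ℕ)) + 1) * s ^ (C :: l).length := by
            rw [List.length_cons, pow_succ, pow_succ]; ring
        _ ≤ A ^ ((j : ℕ) - (i : ℕ)) * s ^ (C :: l).length := by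
            apply mul_le_mul_of_nonneg_right hmono (le_of_lt (pow_pos hs _))

theorem stmt9 {n k : ℕ} (M s : ℝ) (hM : 0 < M) (hs : 0 < s)
    (B : Fin k → Matrix (Fin n) (Fin n) ℝ)
    (hpos : ∀ r i j, 0 ≤ B r i j)
    (htri : ∀ (r : Fin k) (i j : Fin n), (j : ℕ) < (i : ℕ) → B r i j = 0)
    (hbM : ∀ r i j, B r i j ≤ M)
    (hbs : ∀ r i, B r i i ≤ s)
    (i j : Fin n) :
    mlist ((List.finRange k).map B) i j
      ≤ max 1 (M ^ (n - 1) * s ^ (-((n - 1 : ℕ) : ℤ))) * s ^ k := by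
  set l := (List.finRange k).map B with hl
  have hmem : ∀ A ∈ l, ∃ r, A = B r := by
    intro A hA
    rw [hl, List.mem_map] at hA
    obtain ⟨r, _, hr⟩ := hA
    exact ⟨r, hr.symm⟩
  have hlen : l.length = k := by simp [hl]
  have h1 := mlist_bound' M s hM hs l
    (fun A hA => by obtain ⟨r, rfl⟩ := hmem A hA; exact hpos r)
    (fun A hA => by obtain ⟨r, rfl⟩ := hmem A hA; exact htri r)
    (fun A hA => by obtain ⟨r, rfl⟩ := hmem A hA; exact hbM r)
    (fun A hA => by obtain ⟨r, rfl⟩ := hmem A hA; exact hbs r) i j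
  rw [hlen] at h1
  refine le_trans h1 (mul_le_mul_of_nonneg_right ?_ (le_of_lt (pow_pos hs _)))
  have hji : (j : ℕ) - (i : ℕ) ≤ n - 1 := by
    have := j.isLt
    omega
  have hmono : (max 1 (M / s)) ^ ((j : ℕ) - (i : ℕ)) ≤ (max 1 (M / s)) ^ (n - 1) :=
    pow_le_pow_right₀ (le_max_left _ _) hji
  refine le_trans hmono ?_
  rcases le_total M s with hMs | hMs
  · have : max 1 (M / s) = 1 := max_eq_left (div_le_one_of_le₀ hMs (le_of_lt hs))
    rw [this, one_pow]
    exact le_max_left _ _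
  · have : max 1 (M / s) = M / s :=
      max_eq_right ((one_le_div hs).mpr hMs)
    rw [this]
    refine le_trans ?_ (le_max_right _ _)
    rw [div_pow, zpow_neg, zpow_natCast, div_eq_mul_inv]
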